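/- Let F be a finite field whose characteristic does not divide n, where n ≥ 3. Then for every n×n matrix A over F with trace 0 there exists g ∈ SL_n(F) such that g is not a scalar matrix and g·A = A·g. (Equivalently, the conjugation action of PSL_n(F) on the space of trace-zero matrices has no regular orbit.) -/

import Mathlib

open Matrix Finset Module

private lemma myMulVecExt {F : Type*} [Field F] {n : ℕ} {M : Matrix (Fin n) (Fin n) F}
    (h : ∀ v, M *ᵥ v = 0) : M = 0 := by
  ext i j
  have := congrFun (h (Pi.single j 1)) i
  simpa [Matrix.mulVec_single] using this

private lemma existsIdemPow {M : Type*} [Monoid M] [Finite M] (a : M) :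
    ∃ k, 0 < k ∧ a ^ k * a ^ k = a ^ k := by
  obtain ⟨i, j, hij, hpow⟩ : ∃ i j : ℕ, i < j ∧ a ^ i = a ^ j := by
    obtain ⟨i, j, hne, h⟩ := Finite.exists_ne_map_eq_of_infinite (fun i : ℕ => a ^ i)
    rcases Nat.lt_or_gt_of_ne hne with hl | hl
    exacts [⟨i, j, hl, h⟩, ⟨j, i, hl, h.symm⟩]
  set p := j - i with hp
  have hppos : 0 < p := by omega
  have key : ∀ s, i ≤ s → a ^ (s + p) = a ^ s := by
    intro s hs
    have h1 : a ^ (s + p) = a ^ (s - i) * a ^ (i + p) := by rw [← pow_add]; congr 1; omega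
    have h2 : a ^ s = a ^ (s - i) * a ^ i := by rw [← pow_add]; congr 1; omega
    have h3 : a ^ (i + p) = a ^ i := by rw [show i + p = j by omega, ← hpow]
    rw [h1, h3, ← h2]
  have key2 : ∀ t s, i ≤ s → a ^ (s + t * p) = a ^ s := by
    intro t
    induction t with
    | zero => simp
    | succ t ih =>
      intro s hs
      have hh : s + (t + 1) * p = s + t * p + p := by ring
      rw [hh, key _ (by omega), ih s hs]
  have hik : i ≤ (i + 1) * p := by
    calc i ≤ i + 1 := by omega
    _ = (i + 1) * 1 := by ring
    _ ≤ (i + 1) * p := Nat.mul_le_mul_left _ hppos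
  refine ⟨(i + 1) * p, Nat.mul_pos (by omega) hppos, ?_⟩
  rw [← pow_add, key2 (i + 1) ((i + 1) * p) hik]

private lemma myPowEig {F : Type*} [Field F] {n : ℕ} {M : Matrix (Fin n) (Fin n) F}
    {w : Fin n → F} {c : F} (h : M *ᵥ w = c • w) (k : ℕ) : M ^ k *ᵥ w = c ^ k • w := by
  induction k with
  | zero => simp [Matrix.one_mulVec]
  | succ k ih =>
    rw [pow_succ, ← Matrix.mulVec_mulVec, h, Matrix.mulVec_smul, ih, smul_smul, ← pow_succ']

private lemma mySumMulVec {F : Type*} [Field F] {n : ℕ} {ι : Type*} (s : Finset ι)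
    (f : ι → Matrix (Fin n) (Fin n) F) (w : Fin n → F) :
    (∑ i ∈ s, f i) *ᵥ w = ∑ i ∈ s, f i *ᵥ w := by
  classical
  induction s using Finset.induction with
  | empty => simp [Matrix.zero_mulVec]
  | insert _ _ h ih => rw [Finset.sum_insert h, Finset.sum_insert h, Matrix.add_mulVec, ih]

private lemma myFinrankSupLe {F : Type*} [Field F] {n : ℕ} {ι : Type*} [DecidableEq ι]
    (s : Finset ι) (K : ι → Submodule F (Fin n → F)) :
    finrank F (s.sup K : Submodule F (Fin n → F)) ≤ ∑ i ∈ s, finrank F (K i) := by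
  induction s using Finset.induction with
  | empty => simp
  | @insert a s h ih =>
    rw [Finset.sup_insert, Finset.sum_insert h]
    have h2 := Submodule.finrank_sup_add_finrank_inf_eq (K a) (s.sup K)
    omega

private lemma mySolveEig {F : Type*} [Field F] {n : ℕ} (A : Matrix (Fin n) (Fin n) F)
    {c t : F} (ht : t ≠ 0) {u : Fin n → F} (h : c • u + t • (A *ᵥ u) = 0) :
    A *ᵥ u = (-(c / t)) • u := by
  have h1 : t • (A *ᵥ u) = -(c • u) := eq_neg_of_add_eq_zero_right h
  calc A *ᵥ u = (t⁻¹ * t) • (A *ᵥ u) := by rw [inv_mul_cancel₀ ht, one_smul]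
    _ = t⁻¹ • (t • (A *ᵥ u)) := by rw [mul_smul]
    _ = t⁻¹ • (-(c • u)) := by rw [h1]
    _ = (-(c / t)) • u := by
        rw [smul_neg, smul_smul, ← neg_smul]
        congr 1
        rw [mul_comm, ← div_eq_mul_inv]



private lemma myKerRankLe {F : Type*} [Field F] {n : ℕ} (M : Matrix (Fin n) (Fin n) F)
    (φ : Fin n → F)
    (h : ∀ v : Fin n → F, M *ᵥ v = 0 → φ ⬝ᵥ v = 0 → v = 0) :
    finrank F (LinearMap.ker M.mulVecLin) ≤ 1 := by
  set Ψ : (Fin n → F) →ₗ[F] F :=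
    { toFun := fun v => φ ⬝ᵥ v
      map_add' := fun a b => dotProduct_add φ a b
      map_smul' := fun c a => dotProduct_smul c φ a } with hΨ
  have hinj : Function.Injective (Ψ.domRestrict (LinearMap.ker M.mulVecLin)) := by
    rw [← LinearMap.ker_eq_bot, LinearMap.ker_eq_bot']
    intro v hv
    have hv2 : M *ᵥ (v : Fin n → F) = 0 := by
      have := LinearMap.mem_ker.mp v.2
      rwa [Matrix.mulVecLin_apply] at this
    have hv3 : φ ⬝ᵥ (v : Fin n → F) = 0 := hv
    exact Subtype.ext (h v hv2 hv3)
  calc finrank F (LinearMap.ker M.mulVecLin) ≤ finrank F F :=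
    LinearMap.finrank_le_finrank_of_injective hinj
  _ = 1 := Module.finrank_self F

private lemma myMaster {F : Type*} [Field F] [Fintype F] [DecidableEq F] {n : ℕ} (hn : 2 ≤ n)
    (A : Matrix (Fin n) (Fin n) F) (X : Finset (Matrix (Fin n) (Fin n) F))
    (hcomm : ∀ x ∈ X, x * A = A * x)
    (hdet : ∀ x ∈ X, x.det ≠ 0)
    (hcard : (Fintype.card F - 1) * (Fintype.card F - 1) < X.card) :
    ∃ g : Matrix.SpecialLinearGroup (Fin n) F,
      (¬ ∃ c : F, (g : Matrix (Fin n) (Fin n) F) = c • (1 : Matrix (Fin n) (Fin n) F)) ∧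
      (g : Matrix (Fin n) (Fin n) F) * A = A * (g : Matrix (Fin n) (Fin n) F) := by
  classical
  set q := Fintype.card F with hq
  have hq2 : 2 ≤ q := Fintype.one_lt_card
  have htc : ((univ : Finset F).erase 0).card = q - 1 := by
    rw [Finset.card_erase_of_mem (mem_univ 0), Finset.card_univ]
  obtain ⟨δ, hδ, hfib⟩ := Finset.exists_lt_card_fiber_of_mul_lt_card_of_maps_to
    (f := fun x => x.det) (t := (univ : Finset F).erase 0) (n := q - 1) (s := X)
    (fun x hx => Finset.mem_erase.mpr ⟨hdet x hx, mem_univ _⟩) (by rw [htc]; exact hcard)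
  have hδ0 : δ ≠ 0 := (Finset.mem_erase.mp hδ).1
  set Y := X.filter (fun x => x.det = δ) with hY
  have hYcard : q - 1 < Y.card := hfib
  obtain ⟨x₀, hx₀⟩ := Finset.card_pos.mp (by omega : 0 < Y.card)
  have hx₀X : x₀ ∈ X := (Finset.mem_filter.mp hx₀).1
  have hx₀det : x₀.det = δ := (Finset.mem_filter.mp hx₀).2
  set S := ((univ : Finset F).erase 0).image (fun s => s • x₀) with hS
  have hScard : S.card ≤ q - 1 := le_trans Finset.card_image_le (le_of_eq htc)
  have hns : ¬ (Y ⊆ S) := fun hsub => by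
    have := Finset.card_le_card hsub; omega
  obtain ⟨y, hyY, hyS⟩ := Finset.not_subset.mp hns
  have hyX : y ∈ X := (Finset.mem_filter.mp hyY).1
  have hydet : y.det = δ := (Finset.mem_filter.mp hyY).2
  have hu : IsUnit x₀.det := isUnit_iff_ne_zero.mpr (by rw [hx₀det]; exact hδ0)
  have hinv1 : x₀ * x₀⁻¹ = 1 := Matrix.mul_nonsing_inv _ hu
  have hinv2 : x₀⁻¹ * x₀ = 1 := Matrix.nonsing_inv_mul _ hu
  have hdetg : (y * x₀⁻¹).det = 1 := by
    rw [Matrix.det_mul, Matrix.det_nonsing_inv, hydet, hx₀det, Ring.inverse_eq_inv']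
    exact mul_inv_cancel₀ hδ0
  refine ⟨⟨y * x₀⁻¹, hdetg⟩, ?_, ?_⟩
  · rintro ⟨c, hc⟩
    have hc' : y * x₀⁻¹ = c • 1 := hc
    have hyc : y = c • x₀ := by
      calc y = y * x₀⁻¹ * x₀ := by rw [Matrix.mul_assoc, hinv2, Matrix.mul_one]
      _ = (c • (1 : Matrix (Fin n) (Fin n) F)) * x₀ := by rw [hc']
      _ = c • x₀ := by rw [Matrix.smul_mul, Matrix.one_mul]
    have hc0 : c ≠ 0 := by
      rintro rfl
      rw [zero_smul] at hyc
      rw [hyc, (haveI : Nonempty (Fin n) := ⟨⟨0, by omega⟩⟩; Matrix.det_zero)] at hydet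
      exact hδ0 hydet.symm
    exact hyS (Finset.mem_image.mpr ⟨c, Finset.mem_erase.mpr ⟨hc0, mem_univ _⟩, hyc.symm⟩)
  · have hAx₀ : x₀⁻¹ * A = A * x₀⁻¹ := by
      calc x₀⁻¹ * A = x₀⁻¹ * A * (x₀ * x₀⁻¹) := by rw [hinv1, Matrix.mul_one]
      _ = x₀⁻¹ * (A * x₀) * x₀⁻¹ := by simp only [Matrix.mul_assoc]
      _ = x₀⁻¹ * (x₀ * A) * x₀⁻¹ := by rw [hcomm x₀ hx₀X]
      _ = A * x₀⁻¹ := by rw [← Matrix.mul_assoc x₀⁻¹ x₀ A, hinv2, Matrix.one_mul]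
    show y * x₀⁻¹ * A = A * (y * x₀⁻¹)
    rw [Matrix.mul_assoc, hAx₀, ← Matrix.mul_assoc, hcomm y hyX, Matrix.mul_assoc]


private lemma myAlpha {F : Type*} [Field F] {n : ℕ} (hn : 2 ≤ n)
    (A : Matrix (Fin n) (Fin n) F) (lam : F) (v φ : Fin n → F)
    (hv : v ≠ 0) (hφ : φ ≠ 0) (hAv : A *ᵥ v = lam • v) (hAφ : Aᵀ *ᵥ φ = lam • φ)
    (hdot : φ ⬝ᵥ v = 0) :
    ∃ g : Matrix.SpecialLinearGroup (Fin n) F,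
      (¬ ∃ c : F, (g : Matrix (Fin n) (Fin n) F) = c • (1 : Matrix (Fin n) (Fin n) F)) ∧
      (g : Matrix (Fin n) (Fin n) F) * A = A * (g : Matrix (Fin n) (Fin n) F) := by
  set C : Matrix (Fin n) (Fin n) F := Matrix.replicateCol (Fin 1) v * Matrix.replicateRow (Fin 1) φ with hC
  have hdetg : (1 + C).det = 1 := by
    rw [hC]; have := Matrix.det_one_add_replicateCol_mul_replicateRow (ι := Fin 1) v φ
    rw [hdot, add_zero] at this; exact this
  have hCA : C * A = lam • C := by
    rw [hC, Matrix.mul_assoc, ← Matrix.replicateRow_vecMul, ← Matrix.mulVec_transpose, hAφ,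
      Matrix.replicateRow_smul, Matrix.mul_smul]
  have hAC : A * C = lam • C := by
    rw [hC, ← Matrix.mul_assoc, ← Matrix.replicateCol_mulVec, hAv, Matrix.replicateCol_smul, Matrix.smul_mul]
  have hcomm : (1 + C) * A = A * (1 + C) := by
    rw [Matrix.add_mul, Matrix.mul_add, Matrix.one_mul, Matrix.mul_one, hCA, hAC]
  refine ⟨⟨1 + C, hdetg⟩, ?_, hcomm⟩
  rintro ⟨c, hc⟩
  have hc' : (1 : Matrix (Fin n) (Fin n) F) + C = c • 1 := hc
  have hC1 : C = c • (1 : Matrix (Fin n) (Fin n) F) - 1 := by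
    rw [← hc']; abel
  have hCe : ∀ i j, C i j = v i * φ j := by
    intro i j
    rw [hC]
    simp [Matrix.mul_apply]
  have hCoff : ∀ i j, i ≠ j → v i * φ j = 0 := by
    intro i j hij
    have h1 : C i j = 0 := by
      rw [hC1]
      simp [Matrix.one_apply, hij]
    rw [hCe i j] at h1
    exact h1
  obtain ⟨i₀, hi₀⟩ := Function.ne_iff.mp hv
  obtain ⟨j₀, hj₀⟩ := Function.ne_iff.mp hφ
  simp only [Pi.zero_apply] at hi₀ hj₀
  have hii : i₀ = j₀ := by
    by_contra hne
    exact mul_ne_zero hi₀ hj₀ (hCoff i₀ j₀ hne)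
  have hφi₀ : φ i₀ ≠ 0 := by rw [hii]; exact hj₀
  have hφsupp : ∀ j, j ≠ i₀ → φ j = 0 := by
    intro j hj
    have := hCoff i₀ j (fun h => hj h.symm)
    rcases mul_eq_zero.mp this with h | h
    · exact absurd h hi₀
    · exact h
  have hsum : φ ⬝ᵥ v = φ i₀ * v i₀ := by
    rw [dotProduct]
    apply Finset.sum_eq_single i₀
    · intro j _ hj
      rw [hφsupp j hj, zero_mul]
    · intro h
      exact absurd (mem_univ i₀) h
  rw [hdot] at hsum
  exact mul_ne_zero hφi₀ hi₀ hsum.symm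

/-- If `F` is a finite field whose characteristic does not divide `n ≥ 3`, then every
trace-zero `n×n` matrix `A` over `F` commutes with some non-scalar element of `SL_n(F)`;
equivalently, the conjugation action of `PSL_n(F)` on trace-zero matrices has no regular
orbit. -/
theorem stmt7 {F : Type*} [Field F] [Fintype F] (n : ℕ) (hn : 3 ≤ n)
    (hchar : ¬ (ringChar F ∣ n))
    (A : Matrix (Fin n) (Fin n) F) (hA : A.trace = 0) :
    ∃ g : Matrix.SpecialLinearGroup (Fin n) F,
      (¬ ∃ c : F, (g : Matrix (Fin n) (Fin n) F) = c • (1 : Matrix (Fin n) (Fin n) F)) ∧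
      (g : Matrix (Fin n) (Fin n) F) * A = A * (g : Matrix (Fin n) (Fin n) F) := by
  classical
  by_cases hα : ∃ (lam : F) (v φ : Fin n → F), v ≠ 0 ∧ φ ≠ 0 ∧
      A *ᵥ v = lam • v ∧ Aᵀ *ᵥ φ = lam • φ ∧ φ ⬝ᵥ v = 0
  · obtain ⟨lam, v, φ, hv, hφ, hAv, hAφ, hdot⟩ := hα
    exact myAlpha (by omega) A lam v φ hv hφ hAv hAφ hdot
  push_neg at hα
  -- hα : ∀ lam v φ, v ≠ 0 → φ ≠ 0 → A *ᵥ v = lam • v → Aᵀ *ᵥ φ = lam • φ → φ ⬝ᵥ v ≠ 0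
  set B : F → Matrix (Fin n) (Fin n) F := fun l => A - l • 1 with hB
  have hex := fun l : F => existsIdemPow (B l)
  choose m hm hidem using hex
  set E : F → Matrix (Fin n) (Fin n) F := fun l => B l ^ m l with hE
  set P : F → Matrix (Fin n) (Fin n) F := fun l => 1 - E l with hP
  set Λ : Finset F := univ.filter (fun l => (B l).det = 0) with hΛ
  have hmemΛ : ∀ l : F, l ∈ Λ ↔ (B l).det = 0 := by
    intro l; rw [hΛ, Finset.mem_filter]; simp
  -- commutation
  have hcommAB : ∀ l, Commute A (B l) := by
    intro l
    simp only [hB]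
    exact (Commute.refl A).sub_right (Commute.smul_right (Commute.one_right A) l)
  have hcommAE : ∀ l, Commute A (E l) := by
    intro l; simp only [hE]; exact (hcommAB l).pow_right (m l)
  have hcommAP : ∀ l, Commute A (P l) := by
    intro l; simp only [hP]; exact (Commute.one_right A).sub_right (hcommAE l)
  -- eigen facts
  have hBeig : ∀ (l μ : F) (w : Fin n → F), A *ᵥ w = μ • w → B l *ᵥ w = (μ - l) • w := by
    intro l μ w hw
    simp only [hB]
    rw [Matrix.sub_mulVec, Matrix.smul_mulVec, Matrix.one_mulVec, hw, sub_smul]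
  have hB0 : ∀ (l : F) (w : Fin n → F), B l *ᵥ w = 0 → A *ᵥ w = l • w := by
    intro l w h
    simp only [hB] at h
    rw [Matrix.sub_mulVec, Matrix.smul_mulVec, Matrix.one_mulVec] at h
    exact sub_eq_zero.mp h
  have hBT : ∀ l : F, (B l)ᵀ = Aᵀ - l • 1 := by
    intro l
    simp only [hB]
    rw [Matrix.transpose_sub, Matrix.transpose_smul, Matrix.transpose_one]
  have hBT0 : ∀ (l : F) (φ : Fin n → F), (B l)ᵀ *ᵥ φ = 0 → Aᵀ *ᵥ φ = l • φ := by
    intro l φ h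
    rw [hBT, Matrix.sub_mulVec, Matrix.smul_mulVec, Matrix.one_mulVec] at h
    exact sub_eq_zero.mp h
  have hφex : ∀ l ∈ Λ, ∃ φ, φ ≠ 0 ∧ (B l)ᵀ *ᵥ φ = 0 := by
    intro l hl
    have hdet : ((B l)ᵀ).det = 0 := by
      rw [Matrix.det_transpose]; exact (hmemΛ l).mp hl
    obtain ⟨φ, h1, h2⟩ := Matrix.exists_mulVec_eq_zero_iff.mpr hdet
    exact ⟨φ, h1, h2⟩
  -- Step 2 : kernel stability
  have hker2 : ∀ l ∈ Λ, ∀ w, B l *ᵥ (B l *ᵥ w) = 0 → B l *ᵥ w = 0 := by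
    intro l hl w h2
    by_contra hne
    obtain ⟨φ, hφ0, hφ⟩ := hφex l hl
    refine hα l (B l *ᵥ w) φ hne hφ0 (hB0 l _ h2) (hBT0 l φ hφ) ?_
    rw [Matrix.dotProduct_mulVec, ← Matrix.mulVec_transpose, hφ, zero_dotProduct]
  have hkerpow : ∀ l ∈ Λ, ∀ (k : ℕ) (w), B l ^ (k + 1) *ᵥ w = 0 → B l *ᵥ w = 0 := by
    intro l hl k
    induction k with
    | zero => intro w h; rwa [pow_one] at h
    | succ k ih =>
      intro w h
      rw [pow_succ, ← Matrix.mulVec_mulVec] at h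
      exact hker2 l hl w (ih _ h)
  have hEkerB : ∀ l ∈ Λ, ∀ w, E l *ᵥ w = 0 → B l *ᵥ w = 0 := by
    intro l hl w h
    simp only [hE] at h
    obtain ⟨k, hk⟩ : ∃ k, m l = k + 1 := ⟨m l - 1, by have := hm l; omega⟩
    rw [hk] at h
    exact hkerpow l hl k w h
  have hBkerE : ∀ (l : F) (w), B l *ᵥ w = 0 → E l *ᵥ w = 0 := by
    intro l w h
    simp only [hE]
    have h0 : B l *ᵥ w = (0 : F) • w := by rw [h, zero_smul]
    rw [myPowEig h0 (m l), zero_pow (hm l).ne', zero_smul]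
  have hBP : ∀ l ∈ Λ, B l * P l = 0 := by
    intro l hl
    apply myMulVecExt
    intro w
    have hEz : E l *ᵥ (P l *ᵥ w) = 0 := by
      rw [Matrix.mulVec_mulVec]
      have hEP : E l * P l = 0 := by
        simp only [hP]
        rw [Matrix.mul_sub, Matrix.mul_one, hidem l, sub_self]
      rw [hEP, Matrix.zero_mulVec]
    rw [← Matrix.mulVec_mulVec]
    exact hEkerB l hl _ hEz
  have hPkerB : ∀ (l : F) (w : Fin n → F), B l *ᵥ w = 0 → P l *ᵥ w = w := by
    intro l w h
    simp only [hP]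
    rw [Matrix.sub_mulVec, Matrix.one_mulVec, hBkerE l w h, sub_zero]
  have hPP : ∀ l ∈ Λ, ∀ l' ∈ Λ, l ≠ l' → P l * P l' = 0 := by
    intro l hl l' hl' hne
    obtain ⟨z, hz0, hz⟩ := Matrix.exists_mulVec_eq_zero_iff.mpr ((hmemΛ l').mp hl')
    have hAz : A *ᵥ z = l' • z := hB0 l' z hz
    have hBz : B l *ᵥ z = (l' - l) • z := hBeig l l' z hAz
    have hEz : E l *ᵥ z = ((l' - l) ^ m l) • z := by
      simp only [hE]; exact myPowEig hBz (m l)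
    have hγ0 : (l' - l) ^ m l ≠ 0 := pow_ne_zero _ (sub_ne_zero.mpr (Ne.symm hne))
    have hγγ : (l' - l) ^ m l = (l' - l) ^ m l * (l' - l) ^ m l := by
      have h1 : (E l * E l) *ᵥ z = ((l' - l) ^ m l * (l' - l) ^ m l) • z := by
        rw [← Matrix.mulVec_mulVec, hEz, Matrix.mulVec_smul, hEz, smul_smul]
      rw [hidem l, hEz] at h1
      obtain ⟨i, hi⟩ := Function.ne_iff.mp hz0
      simp only [Pi.zero_apply] at hi
      have h2 := congrFun h1 i
      simp only [Pi.smul_apply, smul_eq_mul] at h2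
      exact mul_right_cancel₀ hi h2
    have hγ1 : (l' - l) ^ m l = 1 := by
      exact (mul_left_cancel₀ hγ0 (by rw [mul_one]; exact hγγ)).symm
    apply myMulVecExt
    intro w
    have hz' : B l' *ᵥ (P l' *ᵥ w) = 0 := by
      rw [Matrix.mulVec_mulVec, hBP l' hl', Matrix.zero_mulVec]
    have hA' : A *ᵥ (P l' *ᵥ w) = l' • (P l' *ᵥ w) := hB0 l' _ hz'
    have hB' : B l *ᵥ (P l' *ᵥ w) = (l' - l) • (P l' *ᵥ w) := hBeig l l' _ hA'
    have hE' : E l *ᵥ (P l' *ᵥ w) = P l' *ᵥ w := by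
      simp only [hE]
      rw [myPowEig hB' (m l), hγ1, one_smul]
    rw [← Matrix.mulVec_mulVec]
    conv_lhs => rw [hP]
    rw [Matrix.sub_mulVec, Matrix.one_mulVec, hE', sub_self]
  have hPidem : ∀ l : F, P l * P l = P l := by
    intro l
    simp only [hP]
    rw [Matrix.sub_mul, Matrix.one_mul, Matrix.mul_sub, Matrix.mul_one, hidem l, sub_self,
      sub_zero]
  set Q : Matrix (Fin n) (Fin n) F := ∑ l ∈ Λ, P l with hQ
  set Ed : Matrix (Fin n) (Fin n) F := 1 - Q with hEd
  have hPQ : ∀ l ∈ Λ, P l * Q = P l := by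
    intro l hl
    rw [hQ, Finset.mul_sum, Finset.sum_eq_single l]
    · exact hPidem l
    · intro l' hl' hne
      exact hPP l hl l' hl' (Ne.symm hne)
    · intro h; exact absurd hl h
  have hQP : ∀ l ∈ Λ, Q * P l = P l := by
    intro l hl
    rw [hQ, Finset.sum_mul, Finset.sum_eq_single l]
    · exact hPidem l
    · intro l' hl' hne
      exact hPP l' hl' l hl hne
    · intro h; exact absurd hl h
  have hPEd : ∀ l ∈ Λ, P l * Ed = 0 := by
    intro l hl
    rw [hEd, Matrix.mul_sub, Matrix.mul_one, hPQ l hl, sub_self]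
  have hEdP : ∀ l ∈ Λ, Ed * P l = 0 := by
    intro l hl
    rw [hEd, Matrix.sub_mul, Matrix.one_mul, hQP l hl, sub_self]
  have hQQ : Q * Q = Q := by
    nth_rewrite 1 [hQ]
    rw [Finset.sum_mul, Finset.sum_congr rfl (fun l hl => hPQ l hl), ← hQ]
  have hEdEd : Ed * Ed = Ed := by
    rw [hEd, Matrix.sub_mul, Matrix.one_mul, Matrix.mul_sub, Matrix.mul_one, hQQ, sub_self,
      sub_zero]
  have hcommAQ : Commute A Q := by
    rw [hQ]
    exact Commute.sum_right _ _ _ (fun l _ => hcommAP l)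
  have hcommAEd : Commute A Ed := by
    rw [hEd]
    exact (Commute.one_right A).sub_right hcommAQ
  have hEker : ∀ (μ : F) (u : Fin n → F), A *ᵥ u = μ • u → Ed *ᵥ u = u → u = 0 := by
    intro μ u hAu hEu
    have hBu : B μ *ᵥ u = 0 := by rw [hBeig μ μ u hAu, sub_self, zero_smul]
    by_cases hμ : (B μ).det = 0
    · have hμΛ : μ ∈ Λ := (hmemΛ μ).mpr hμ
      have hPu : P μ *ᵥ u = u := hPkerB μ u hBu
      calc u = P μ *ᵥ u := hPu.symm
      _ = P μ *ᵥ (Ed *ᵥ u) := by rw [hEu]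
      _ = (P μ * Ed) *ᵥ u := Matrix.mulVec_mulVec u (P μ) Ed
      _ = 0 := by rw [hPEd μ hμΛ, Matrix.zero_mulVec]
    · by_contra hu
      exact hμ (Matrix.exists_mulVec_eq_zero_iff.mp ⟨u, hu, hBu⟩)
  have hYcomm : ∀ (c t : F) (M : Matrix (Fin n) (Fin n) F), Commute A M →
      M * (c • 1 + t • A) = (c • 1 + t • A) * M := by
    intro c t M hM
    simp only [Matrix.mul_add, Matrix.add_mul, Matrix.mul_smul, Matrix.smul_mul,
      Matrix.mul_one, Matrix.one_mul, hM.eq]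
  have hPx : ∀ (ε : F → F) (c t : F), ∀ l ∈ Λ,
      P l * ((∑ l' ∈ Λ, ε l' • P l') + (c • 1 + t • A) * Ed) = ε l • P l := by
    intro ε c t l hl
    rw [Matrix.mul_add]
    have h1 : P l * (∑ l' ∈ Λ, ε l' • P l') = ε l • P l := by
      rw [Finset.mul_sum, Finset.sum_eq_single l]
      · rw [Matrix.mul_smul, hPidem l]
      · intro l' hl' hne
        rw [Matrix.mul_smul, hPP l hl l' hl' (Ne.symm hne), smul_zero]
      · intro h; exact absurd hl h
    have h2 : P l * ((c • 1 + t • A) * Ed) = 0 := by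
      rw [← Matrix.mul_assoc, hYcomm c t (P l) (hcommAP l), Matrix.mul_assoc, hPEd l hl,
        Matrix.mul_zero]
    rw [h1, h2, add_zero]
  have hEx : ∀ (ε : F → F) (c t : F),
      Ed * ((∑ l' ∈ Λ, ε l' • P l') + (c • 1 + t • A) * Ed) = (c • 1 + t • A) * Ed := by
    intro ε c t
    rw [Matrix.mul_add]
    have h1 : Ed * (∑ l' ∈ Λ, ε l' • P l') = 0 := by
      rw [Finset.mul_sum]
      apply Finset.sum_eq_zero
      intro l' hl'
      rw [Matrix.mul_smul, hEdP l' hl', smul_zero]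
    have h2 : Ed * ((c • 1 + t • A) * Ed) = (c • 1 + t • A) * Ed := by
      rw [← Matrix.mul_assoc, hYcomm c t Ed hcommAEd, Matrix.mul_assoc, hEdEd]
    rw [h1, h2, zero_add]
  have hYmulVec : ∀ (c t : F) (u : Fin n → F),
      (c • 1 + t • A) *ᵥ u = c • u + t • (A *ᵥ u) := by
    intro c t u
    rw [Matrix.add_mulVec, Matrix.smul_mulVec, Matrix.smul_mulVec,
      Matrix.one_mulVec]
  have hEfix : ∀ w : Fin n → F, Ed *ᵥ (Ed *ᵥ w) = Ed *ᵥ w := by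
    intro w
    rw [Matrix.mulVec_mulVec, hEdEd]
  have hdetx : ∀ ε : F → F, (∀ l ∈ Λ, ε l ≠ 0) → ∀ c t : F, (c ≠ 0 ∨ t ≠ 0) →
      ((∑ l ∈ Λ, ε l • P l) + (c • 1 + t • A) * Ed).det ≠ 0 := by
    intro ε hε c t hct hdet0
    obtain ⟨w, hw0, hw⟩ := Matrix.exists_mulVec_eq_zero_iff.mpr hdet0
    have hPw : ∀ l ∈ Λ, P l *ᵥ w = 0 := by
      intro l hl
      have h1 : (ε l • P l) *ᵥ w = 0 := by
        rw [← hPx ε c t l hl, ← Matrix.mulVec_mulVec, hw, Matrix.mulVec_zero]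
      rw [Matrix.smul_mulVec] at h1
      exact (smul_eq_zero.mp h1).resolve_left (hε l hl)
    have hEw : (c • 1 + t • A) *ᵥ (Ed *ᵥ w) = 0 := by
      have h1 : (Ed * ((∑ l ∈ Λ, ε l • P l) + (c • 1 + t • A) * Ed)) *ᵥ w = 0 := by
        rw [← Matrix.mulVec_mulVec, hw, Matrix.mulVec_zero]
      rw [hEx ε c t, ← Matrix.mulVec_mulVec] at h1
      exact h1
    have hu0 : Ed *ᵥ w = 0 := by
      by_contra hu
      rw [hYmulVec] at hEw
      rcases Classical.em (t = 0) with ht | ht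
      · rw [ht, zero_smul, add_zero] at hEw
        have hc : c ≠ 0 := hct.resolve_right (fun h => h ht)
        exact hu ((smul_eq_zero.mp hEw).resolve_left hc)
      · exact hu (hEker _ _ (mySolveEig A ht hEw) (hEfix w))
    apply hw0
    have hsplit : w = Q *ᵥ w + Ed *ᵥ w := by
      have hQE : Q + Ed = 1 := by rw [hEd]; exact add_sub_cancel Q 1
      calc w = (1 : Matrix (Fin n) (Fin n) F) *ᵥ w := (Matrix.one_mulVec w).symm
      _ = (Q + Ed) *ᵥ w := by rw [hQE]
      _ = Q *ᵥ w + Ed *ᵥ w := Matrix.add_mulVec Q Ed w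
    rw [hsplit, hu0, add_zero, hQ, mySumMulVec]
    exact Finset.sum_eq_zero hPw
  have hcommx : ∀ (ε : F → F) (c t : F),
      Commute A ((∑ l ∈ Λ, ε l • P l) + (c • 1 + t • A) * Ed) := by
    intro ε c t
    apply Commute.add_right
    · exact Commute.sum_right _ _ _ (fun l _ => (hcommAP l).smul_right (ε l))
    · exact Commute.mul_right
        (Commute.add_right ((Commute.one_right A).smul_right c)
          ((Commute.refl A).smul_right t)) hcommAEd
  set q := Fintype.card F with hq
  have hq2 : 2 ≤ q := Fintype.one_lt_card
  by_cases hE0 : Ed = 0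
  · -- all of the space is spanned by eigen-projections
    have hQ1 : Q = 1 := by
      rw [hEd] at hE0
      exact (sub_eq_zero.mp hE0).symm
    have hK1 : ∀ l ∈ Λ, finrank F (LinearMap.ker ((B l).mulVecLin)) ≤ 1 := by
      intro l hl
      obtain ⟨φ, hφ0, hφ⟩ := hφex l hl
      apply myKerRankLe (B l) φ
      intro v hv2 hv3
      by_contra h
      exact hα l v φ h hφ0 (hB0 l _ hv2) (hBT0 l φ hφ) hv3
    have hsup : Λ.sup (fun l => LinearMap.ker ((B l).mulVecLin)) = ⊤ := by
      rw [eq_top_iff]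
      intro w _
      have hw : w = ∑ l ∈ Λ, P l *ᵥ w := by
        calc w = Q *ᵥ w := by rw [hQ1, Matrix.one_mulVec]
        _ = ∑ l ∈ Λ, P l *ᵥ w := by rw [hQ, mySumMulVec]
      rw [hw]
      apply Submodule.sum_mem
      intro l hl
      refine Finset.le_sup (f := fun l => LinearMap.ker ((B l).mulVecLin)) hl ?_
      rw [LinearMap.mem_ker, Matrix.mulVecLin_apply, Matrix.mulVec_mulVec, hBP l hl,
        Matrix.zero_mulVec]
    have hnk : n ≤ Λ.card := by
      have h1 := myFinrankSupLe Λ (fun l => LinearMap.ker ((B l).mulVecLin))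
      rw [hsup] at h1
      have h2 : finrank F (⊤ : Submodule F (Fin n → F)) = n := by
        rw [finrank_top, Module.finrank_pi, Fintype.card_fin]
      have h3 : ∑ l ∈ Λ, finrank F (LinearMap.ker ((B l).mulVecLin)) ≤ ∑ _l ∈ Λ, 1 :=
        Finset.sum_le_sum hK1
      rw [Finset.sum_const, smul_eq_mul, mul_one] at h3
      omega
    obtain ⟨s, hsub3, hs3⟩ := Finset.exists_subset_card_eq (le_trans hn hnk)
    obtain ⟨a, b, c, hab, hac, hbc, rfl⟩ := Finset.card_eq_three.mp hs3
    have haΛ : a ∈ Λ := hsub3 (by simp)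
    have hbΛ : b ∈ Λ := hsub3 (by simp)
    have hcΛ : c ∈ Λ := hsub3 (by simp)
    have hq3 : 3 ≤ q := by
      have hcu : Λ.card ≤ q := by
        rw [hq]
        simpa using Finset.card_le_univ Λ
      omega
    have hP0 : ∀ l ∈ Λ, P l ≠ 0 := by
      intro l hl h0
      simp only [hP] at h0
      have hE1 : E l = 1 := (sub_eq_zero.mp h0).symm
      have hd : (E l).det = 0 := by
        simp only [hE]
        rw [Matrix.det_pow, (hmemΛ l).mp hl, zero_pow (hm l).ne']
      rw [hE1, Matrix.det_one] at hd
      exact one_ne_zero hd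
    set ε : F × F × F → F → F :=
      fun p l => if l = a then p.1 else if l = b then p.2.1 else if l = c then p.2.2 else 1
      with hεd
    set D : Finset (F × F × F) :=
      (univ.erase 0) ×ˢ ((univ.erase 0) ×ˢ (univ.erase 0)) with hD
    have hεne : ∀ p ∈ D, ∀ l ∈ Λ, ε p l ≠ 0 := by
      intro p hp l _
      obtain ⟨h1, h2, h3⟩ : p.1 ≠ 0 ∧ p.2.1 ≠ 0 ∧ p.2.2 ≠ 0 := by
        rw [hD] at hp
        simp only [Finset.mem_product, Finset.mem_erase] at hp
        exact ⟨hp.1.1, hp.2.1.1, hp.2.2.1⟩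
      simp only [hεd]
      split_ifs
      exacts [h1, h2, h3, one_ne_zero]
    set f : F × F × F → Matrix (Fin n) (Fin n) F :=
      fun p => (∑ l ∈ Λ, ε p l • P l) + ((1 : F) • 1 + (0 : F) • A) * Ed with hf
    have hεval : ∀ p : F × F × F, ε p a = p.1 ∧ ε p b = p.2.1 ∧ ε p c = p.2.2 := by
      intro p
      refine ⟨?_, ?_, ?_⟩
      · simp [hεd]
      · simp [hεd, Ne.symm hab]
      · simp [hεd, Ne.symm hac, Ne.symm hbc]
    have hinjf : Set.InjOn f D := by
      intro p hp p' hp' heq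
      have key : ∀ l ∈ Λ, ε p l = ε p' l := by
        intro l hl
        have h1 : ε p l • P l = ε p' l • P l := by
          rw [← hPx (ε p) 1 0 l hl, ← hPx (ε p') 1 0 l hl]
          simp only [hf] at heq
          rw [heq]
        have h4 : (ε p l - ε p' l) • P l = 0 := by rw [sub_smul, h1, sub_self]
        rcases smul_eq_zero.mp h4 with h | h
        · exact sub_eq_zero.mp h
        · exact absurd h (hP0 l hl)
      have e1 := key a haΛ
      have e2 := key b hbΛ
      have e3 := key c hcΛ
      rw [(hεval p).1, (hεval p').1] at e1
      rw [(hεval p).2.1, (hεval p').2.1] at e2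
      rw [(hεval p).2.2, (hεval p').2.2] at e3
      exact Prod.ext e1 (Prod.ext e2 e3)
    set X := D.image f with hX
    have hDcard : D.card = (q - 1) * ((q - 1) * (q - 1)) := by
      rw [hD, Finset.card_product, Finset.card_product,
        Finset.card_erase_of_mem (mem_univ 0), Finset.card_univ]
    apply myMaster (by omega) A X
    · intro x hx
      obtain ⟨p, hp, rfl⟩ := Finset.mem_image.mp hx
      exact ((hcommx (ε p) 1 0).eq).symm
    · intro x hx
      obtain ⟨p, hp, rfl⟩ := Finset.mem_image.mp hx
      exact hdetx (ε p) (hεne p hp) 1 0 (Or.inl one_ne_zero)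
    · rw [hX, Finset.card_image_of_injOn hinjf, hDcard, ← hq]
      have hpos : 0 < (q - 1) * (q - 1) := Nat.mul_pos (by omega) (by omega)
      calc (q - 1) * (q - 1) = (q - 1) * (q - 1) * 1 := (mul_one _).symm
      _ < (q - 1) * (q - 1) * (q - 1) :=
          mul_lt_mul_of_pos_left (by omega : (1 : ℕ) < q - 1) hpos
      _ = (q - 1) * ((q - 1) * (q - 1)) := by ring
  · -- Ed ≠ 0
    set f : F × F → Matrix (Fin n) (Fin n) F :=
      fun p => (∑ l ∈ Λ, (1 : F) • P l) + (p.1 • 1 + p.2 • A) * Ed with hf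
    set D : Finset (F × F) := (univ ×ˢ univ).erase (0, 0) with hD
    have hne00 : ∀ p : F × F, p ∈ D → (p.1 ≠ 0 ∨ p.2 ≠ 0) := by
      intro p hp
      have hne := (Finset.mem_erase.mp hp).1
      by_contra h
      push_neg at h
      exact hne (Prod.ext h.1 h.2)
    have hinjf : Set.InjOn f D := by
      intro p hp p' hp' heq
      simp only [hf] at heq
      have hXY : (p.1 • 1 + p.2 • A) * Ed = (p'.1 • 1 + p'.2 • A) * Ed :=
        add_left_cancel heq
      have hsub : ((p.1 - p'.1) • (1 : Matrix (Fin n) (Fin n) F) + (p.2 - p'.2) • A) * Ed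
          = 0 := by
        have h1 : ((p.1 - p'.1) • (1 : Matrix (Fin n) (Fin n) F) + (p.2 - p'.2) • A) * Ed
            = ((p.1 • 1 + p.2 • A) * Ed) - ((p'.1 • 1 + p'.2 • A) * Ed) := by
          rw [← Matrix.sub_mul]
          congr 1
          rw [sub_smul, sub_smul]
          abel
        rw [h1, hXY, sub_self]
      obtain ⟨w, hwne⟩ : ∃ w, Ed *ᵥ w ≠ 0 := by
        by_contra h
        push_neg at h
        exact hE0 (myMulVecExt h)
      have h0 : (p.1 - p'.1) • (Ed *ᵥ w) + (p.2 - p'.2) • (A *ᵥ (Ed *ᵥ w)) = 0 := by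
        have h2 : (((p.1 - p'.1) • (1 : Matrix (Fin n) (Fin n) F) + (p.2 - p'.2) • A) * Ed)
            *ᵥ w = 0 := by rw [hsub, Matrix.zero_mulVec]
        rw [← Matrix.mulVec_mulVec, hYmulVec] at h2
        exact h2
      have h21 : p.2 = p'.2 := by
        by_contra hne
        have ht : p.2 - p'.2 ≠ 0 := sub_ne_zero.mpr hne
        exact hwne (hEker _ _ (mySolveEig A ht h0) (hEfix w))
      have h11 : p.1 = p'.1 := by
        rw [h21, sub_self, zero_smul, add_zero] at h0
        have hz := (smul_eq_zero.mp h0).resolve_right hwne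
        exact sub_eq_zero.mp hz
      exact Prod.ext h11 h21
    set X : Finset (Matrix (Fin n) (Fin n) F) := D.image f with hX
    have hXcard : X.card = q * q - 1 := by
      rw [hX, Finset.card_image_of_injOn hinjf, hD,
        Finset.card_erase_of_mem (by simp), Finset.card_product, Finset.card_univ]
    apply myMaster (by omega) A X
    · intro x hx
      obtain ⟨p, hp, rfl⟩ := Finset.mem_image.mp hx
      exact ((hcommx (fun _ => 1) p.1 p.2).eq).symm
    · intro x hx
      obtain ⟨p, hp, rfl⟩ := Finset.mem_image.mp hx
      exact hdetx (fun _ => 1) (fun _ _ => one_ne_zero) p.1 p.2 (hne00 p hp)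
    · rw [hXcard, ← hq]
      obtain ⟨a, ha1, haq⟩ : ∃ a, 1 ≤ a ∧ q = a + 1 := ⟨q - 1, by omega, by omega⟩
      rw [haq]
      have hkey : (a + 1) * (a + 1) - 1 = a * a + 2 * a :=
        Nat.sub_eq_of_eq_add (by ring)
      rw [hkey]
      have hsimp : a + 1 - 1 = a := by omega
      rw [hsimp]
      exact Nat.lt_add_of_pos_right (by omega)
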